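/- Let E be a measurable space, let G be a finite group acting measurably on E, and let Z be a random element of E such that g·Z has the same distribution as Z for every g ∈ G. Let S : E → ℝ be measurable and assume that almost surely the values (S(g·Z))_{g ∈ G} are pairwise distinct. Define the randomization p-value p(Z) = (1/|G|) · |{ g ∈ G : S(g·Z) ≥ S(Z) }|. Then for every α ∈ (0,1), P( p(Z) > α ) = ⌈(1−α)|G|⌉ / |G|; in particular, 1 − α ≤ P( p(Z) > α ) ≤ 1 − α + 1/|G|. -/

import Mathlib

open MeasureTheory

lemma rank_count {ι : Type*} [Fintype ι] (f : ι → ℝ) (hf : Function.Injective f)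
    (k : ℕ) (hk1 : 1 ≤ k) :
    (Finset.univ.filter fun h : ι =>
        k ≤ (Finset.univ.filter fun g : ι => f h ≤ f g).card).card
      = Fintype.card ι + 1 - k := by
  classical
  set N := Fintype.card ι with hN
  set r : ι → ℕ := fun h => (Finset.univ.filter fun g : ι => f h ≤ f g).card with hr
  have hanti : ∀ h h' : ι, f h < f h' → r h' < r h := by
    intro h h' hlt
    apply Finset.card_lt_card
    constructor
    · intro g hg
      simp only [Finset.mem_filter, Finset.mem_univ, true_and] at hg ⊢
      linarith
    · intro hsub
      have := hsub (by simp : h ∈ Finset.univ.filter fun g => f h ≤ f g)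
      simp only [Finset.mem_filter, Finset.mem_univ, true_and] at this
      linarith
  have hrinj : Function.Injective r := by
    intro h h' he
    by_contra hne
    rcases lt_trichotomy (f h) (f h') with hlt | heq | hlt
    · exact absurd he (Nat.ne_of_lt (hanti h h' hlt)).symm
    · exact hne (hf heq)
    · exact absurd he (Nat.ne_of_lt (hanti h' h hlt))
  have himg : Finset.image r Finset.univ = Finset.Icc 1 N := by
    apply Finset.eq_of_subset_of_card_le
    · intro m hm
      simp only [Finset.mem_image, Finset.mem_univ, true_and] at hm
      obtain ⟨h, rfl⟩ := hm
      simp only [Finset.mem_Icc]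
      constructor
      · have : h ∈ Finset.univ.filter fun g : ι => f h ≤ f g := by simp
        exact Finset.card_pos.mpr ⟨h, this⟩
      · exact (Finset.card_filter_le _ _).trans (le_of_eq rfl)
    · rw [Finset.card_image_of_injective _ hrinj, Nat.card_Icc]
      simp [hN]
  have key : (Finset.univ.filter fun h : ι => k ≤ r h).card
      = ((Finset.image r Finset.univ).filter fun m => k ≤ m).card := by
    rw [Finset.filter_image, Finset.card_image_of_injective _ hrinj]
  rw [show (Finset.univ.filter fun h : ι =>
        k ≤ (Finset.univ.filter fun g : ι => f h ≤ f g).card) =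
      (Finset.univ.filter fun h : ι => k ≤ r h) from rfl, key, himg]
  have : (Finset.Icc 1 N).filter (fun m => k ≤ m) = Finset.Icc k N := by
    ext m
    simp only [Finset.mem_filter, Finset.mem_Icc]
    omega
  rw [this, Nat.card_Icc]

theorem randomization_pvalue_valid
    {E : Type*} [MeasurableSpace E] {G : Type*} [Group G] [Fintype G] [MulAction G E]
    (hact : ∀ g : G, Measurable fun z : E => g • z)
    {Ω : Type*} [MeasurableSpace Ω] (P : Measure Ω) [IsProbabilityMeasure P]
    (Z : Ω → E) (hZ : Measurable Z)
    (hinv : ∀ g : G, Measure.map (fun ω => g • Z ω) P = Measure.map Z P)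
    (S : E → ℝ) (hS : Measurable S)
    (hdist : ∀ᵐ ω ∂P, ∀ g g' : G, S (g • Z ω) = S (g' • Z ω) → g = g')
    (α : ℝ) (hα : α ∈ Set.Ioo (0 : ℝ) 1) :
    (P {ω | α < ((Finset.univ.filter fun g : G => S (Z ω) ≤ S (g • Z ω)).card : ℝ) /
        (Fintype.card G : ℝ)}).toReal =
      (⌈(1 - α) * (Fintype.card G : ℝ)⌉ : ℝ) / (Fintype.card G : ℝ) ∧
    1 - α ≤ (P {ω | α < ((Finset.univ.filter fun g : G => S (Z ω) ≤ S (g • Z ω)).card : ℝ) /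
        (Fintype.card G : ℝ)}).toReal ∧
    (P {ω | α < ((Finset.univ.filter fun g : G => S (Z ω) ≤ S (g • Z ω)).card : ℝ) /
        (Fintype.card G : ℝ)}).toReal ≤ 1 - α + 1 / (Fintype.card G : ℝ) := by
  classical
  obtain ⟨hα0, hα1⟩ := hα
  set N := Fintype.card G with hNdef
  have hNpos : 0 < N := Fintype.card_pos
  have hNR : (0:ℝ) < N := by exact_mod_cast hNpos
  set R : E → ℕ := fun z => (Finset.univ.filter fun g : G => S z ≤ S (g • z)).card with hR
  have hRmeas : Measurable R := by
    have hre : R = fun z => ∑ g : G, if S z ≤ S (g • z) then 1 else 0 := by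
      funext z; exact Finset.card_filter _ _
    rw [hre]
    exact Finset.measurable_sum _ fun g _ =>
      Measurable.ite (measurableSet_le hS (hS.comp (hact g))) measurable_const measurable_const
  set k : ℕ := ⌊α * (N:ℝ)⌋₊ + 1 with hk
  have hfloorN : ⌊α * (N:ℝ)⌋₊ < N := by
    rw [Nat.floor_lt (by positivity)]
    nlinarith
  have hkN : k ≤ N := by omega
  have hgoalset : {ω | α < ((Finset.univ.filter fun g : G =>
        S (Z ω) ≤ S (g • Z ω)).card : ℝ) / (Fintype.card G : ℝ)} = {ω | k ≤ R (Z ω)} := by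
    ext ω
    show α < ((R (Z ω) : ℕ) : ℝ) / (N : ℝ) ↔ k ≤ R (Z ω)
    rw [lt_div_iff₀ hNR]
    constructor
    · intro hlt
      have h3 : ⌊α * (N:ℝ)⌋₊ < R (Z ω) := (Nat.floor_lt (by positivity)).mpr hlt
      omega
    · intro hk2
      have h1 : α * (N:ℝ) < ⌊α * (N:ℝ)⌋₊ + 1 := Nat.lt_floor_add_one _
      have h2 : ((k : ℕ) : ℝ) ≤ (R (Z ω) : ℝ) := by exact_mod_cast hk2
      rw [hk] at h2
      push_cast at h2
      linarith
  rw [hgoalset]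
  have hAmeas : MeasurableSet {z : E | k ≤ R z} :=
    measurableSet_le measurable_const hRmeas
  have hmeas_h : ∀ h : G, MeasurableSet {ω | k ≤ R (h • Z ω)} := fun h =>
    ((hact h).comp hZ) hAmeas
  have hinv' : ∀ h : G, P {ω | k ≤ R (h • Z ω)} = P {ω | k ≤ R (Z ω)} := by
    intro h
    have hm : Measurable fun ω : Ω => h • Z ω := (hact h).comp hZ
    have h1 : P {ω | k ≤ R (h • Z ω)} = Measure.map (fun ω => h • Z ω) P {z | k ≤ R z} := by
      rw [Measure.map_apply hm hAmeas]; rfl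
    have h2 : P {ω | k ≤ R (Z ω)} = Measure.map Z P {z | k ≤ R z} := by
      rw [Measure.map_apply hZ hAmeas]; rfl
    rw [h1, hinv h, h2]
  have hcount : ∀ᵐ ω ∂P,
      (Finset.univ.filter fun h : G => k ≤ R (h • Z ω)).card = N + 1 - k := by
    filter_upwards [hdist] with ω hω
    have hinj : Function.Injective fun g : G => S (g • Z ω) := fun g g' hgg => hω g g' hgg
    have hrc := rank_count (fun g : G => S (g • Z ω)) hinj k (by omega)
    rw [← hrc]
    congr 1
    ext h
    simp only [Finset.mem_filter, Finset.mem_univ, true_and]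
    have hRe : R (h • Z ω) =
        (Finset.univ.filter fun g : G => S (h • Z ω) ≤ S (g • Z ω)).card := by
      rw [hR]
      apply Finset.card_equiv (Equiv.mulRight h)
      intro g
      simp [mul_smul]
    rw [hRe]
  have hsum : (N : ENNReal) * P {ω | k ≤ R (Z ω)} = ((N + 1 - k : ℕ) : ENNReal) := by
    have hsc : ∑ h : G, P {ω | k ≤ R (h • Z ω)} = (N : ENNReal) * P {ω | k ≤ R (Z ω)} := by
      simp only [hinv']
      rw [Finset.sum_const, Finset.card_univ, ← hNdef, nsmul_eq_mul]
    rw [← hsc]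
    have hind : ∀ h : G, P {ω | k ≤ R (h • Z ω)}
        = ∫⁻ ω, Set.indicator {ω | k ≤ R (h • Z ω)} (fun _ => (1 : ENNReal)) ω ∂P := by
      intro h
      rw [lintegral_indicator (hmeas_h h)]
      simp
    calc ∑ h : G, P {ω | k ≤ R (h • Z ω)}
        = ∑ h : G, ∫⁻ ω, Set.indicator {ω | k ≤ R (h • Z ω)} (fun _ => (1:ENNReal)) ω ∂P := by
          exact Finset.sum_congr rfl fun h _ => hind h
      _ = ∫⁻ ω, ∑ h : G, Set.indicator {ω | k ≤ R (h • Z ω)} (fun _ => (1:ENNReal)) ω ∂P := by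
          rw [lintegral_finset_sum _ (fun h _ => (measurable_const.indicator (hmeas_h h)))]
      _ = ∫⁻ _ω, ((N + 1 - k : ℕ) : ENNReal) ∂P := by
          apply lintegral_congr_ae
          filter_upwards [hcount] with ω hω
          have : ∑ h : G, Set.indicator {ω | k ≤ R (h • Z ω)} (fun _ => (1:ENNReal)) ω
              = ((Finset.univ.filter fun h : G => k ≤ R (h • Z ω)).card : ENNReal) := by
            rw [Finset.card_filter]
            push_cast
            apply Finset.sum_congr rfl
            intro h _
            by_cases hc : k ≤ R (h • Z ω) <;> simp [Set.indicator_apply, hc]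
          rw [this, hω]
      _ = ((N + 1 - k : ℕ) : ENNReal) := by simp
  have hNne : (N : ENNReal) ≠ 0 := by simp [hNpos.ne']
  have hNtop : (N : ENNReal) ≠ ⊤ := by simp
  have hPA : (P {ω | k ≤ R (Z ω)}).toReal = ((N + 1 - k : ℕ) : ℝ) / N := by
    have heq : P {ω | k ≤ R (Z ω)} = ((N + 1 - k : ℕ) : ENNReal) / N := by
      rw [ENNReal.eq_div_iff hNne hNtop, hsum]
    rw [heq, ENNReal.toReal_div, ENNReal.toReal_natCast, ENNReal.toReal_natCast]
  have hceil : (⌈(1 - α) * (N:ℝ)⌉ : ℤ) = (N : ℤ) - (⌊α * (N:ℝ)⌋₊ : ℤ) := by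
    rw [show (1 - α) * (N:ℝ) = -(α * (N:ℝ)) + (N:ℕ) by push_cast; ring,
      Int.ceil_add_natCast, Int.ceil_neg, Int.natCast_floor_eq_floor (by positivity)]
    ring
  have hcastZ : ((N + 1 - k : ℕ) : ℤ) = ⌈(1 - α) * (N:ℝ)⌉ := by
    rw [hceil]; omega
  have hcast : ((N + 1 - k : ℕ) : ℝ) = (⌈(1 - α) * (N:ℝ)⌉ : ℝ) := by exact_mod_cast hcastZ
  rw [hPA, hcast]
  have hle : (1 - α) * (N:ℝ) ≤ (⌈(1 - α) * (N:ℝ)⌉ : ℝ) := Int.le_ceil _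
  have hlt : (⌈(1 - α) * (N:ℝ)⌉ : ℝ) < (1 - α) * (N:ℝ) + 1 := Int.ceil_lt_add_one _
  refine ⟨rfl, ?_, ?_⟩
  · rw [le_div_iff₀ hNR]; nlinarith
  · rw [div_le_iff₀ hNR]
    have he : (1 - α + 1 / (N:ℝ)) * N = (1 - α) * N + 1 := by field_simp
    rw [he]; linarith
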